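/- The WAM has globally bilinear commutative transitions: for any WAM execution ρ of initial code t̄, the total number of commutative transitions satisfies |ρ|_c1 + |ρ|_c2 = O((|t̄|+1)·|ρ|_p), where |ρ|_p is the number of principal transitions; this holds even though the WAM is not locally linear, using that |ρ|_c2 ≤ |ρ|_p (global bound) and that maximal →c1 blocks have length ≤ |t̄| while their number is bounded by the number of non-→c1 transitions, itself O(|ρ|_p). -/
import Mathlib


/-- Pure λ-terms (codes of the machine). -/
inductive PTerm : Type
  | var : ℕ → PTerm
  | lam : ℕ → PTerm → PTerm
  | app : PTerm → PTerm → PTerm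
deriving DecidableEq

def PTerm.fv : PTerm → Finset ℕ
  | .var x => {x}
  | .lam x t => t.fv.erase x
  | .app t u => t.fv ∪ u.fv

def PTerm.size : PTerm → ℕ
  | .var _ => 1
  | .lam _ t => t.size + 1
  | .app t u => t.size + u.size + 1
def PTerm.rename (x y : ℕ) : PTerm → PTerm
  | .var z => if z = x then .var y else .var z
  | .lam z t => if z = x then .lam z t else .lam z (t.rename x y)
  | .app t u => .app (t.rename x y) (u.rename x y)

/-- α-equivalence on pure terms. -/
inductive PAlpha : PTerm → PTerm → Prop
  | var (x : ℕ) : PAlpha (.var x) (.var x)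
  | app : PAlpha t t' → PAlpha u u' → PAlpha (.app t u) (.app t' u')
  | lam (x y : ℕ) (t t' : PTerm) :
      (y = x ∨ y ∉ t.fv) → PAlpha (t.rename x y) t' → PAlpha (.lam x t) (.lam y t')

/-- WAM global environments: lists of substitutions `[x←t̄]`. -/
abbrev WEnv := List (ℕ × PTerm)

/-- WAM dump entries `(E, x, π)`. -/
abbrev WDump := List (WEnv × ℕ × List PTerm)

/-- WAM states `(t̄ | π | D | E)`. -/
structure WState : Type where
  code : PTerm
  stack : List PTerm
  dump : WDump
  env : WEnv

/-- The WAM transitions, given as an execution relation counting the numbers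
    of `→c1`, `→c2`, multiplicative and exponential transitions. -/
inductive WExec : ℕ → ℕ → ℕ → ℕ → WState → WState → Prop
  | refl (s : WState) : WExec 0 0 0 0 s s
  | c1step {c₁ c₂ m e : ℕ} {s'' : WState} (t u : PTerm) (π : List PTerm)
      (D : WDump) (E : WEnv) :
      WExec c₁ c₂ m e ⟨t, u :: π, D, E⟩ s'' →
      WExec (c₁ + 1) c₂ m e ⟨.app t u, π, D, E⟩ s''
  | c2step {c₁ c₂ m e : ℕ} {s'' : WState} (x : ℕ) (t : PTerm) (π : List PTerm)
      (D : WDump) (E₁ E₂ : WEnv) :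
      (∀ p ∈ E₁, p.1 ≠ x) →
      WExec c₁ c₂ m e ⟨t, [], (E₁, x, π) :: D, E₂⟩ s'' →
      WExec c₁ (c₂ + 1) m e ⟨.var x, π, D, E₁ ++ (x, t) :: E₂⟩ s''
  | mstep {c₁ c₂ m e : ℕ} {s'' : WState} (x : ℕ) (t u : PTerm) (π : List PTerm)
      (D : WDump) (E : WEnv) :
      WExec c₁ c₂ m e ⟨t, π, D, (x, u) :: E⟩ s'' →
      WExec c₁ c₂ (m + 1) e ⟨.lam x t, u :: π, D, E⟩ s''
  | estep {c₁ c₂ m e : ℕ} {s'' : WState} (y : ℕ) (b : PTerm) (v' : PTerm)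
      (x : ℕ) (π : List PTerm) (D : WDump) (E₁ E : WEnv) :
      PAlpha (.lam y b) v' →
      WExec c₁ c₂ m e ⟨v', π, D, E₁ ++ (x, .lam y b) :: E⟩ s'' →
      WExec c₁ c₂ m (e + 1) ⟨.lam y b, [], (E₁, x, π) :: D, E⟩ s''

theorem rename_size (x y : ℕ) (t : PTerm) : (t.rename x y).size = t.size := by
  induction t with
  | var z => simp only [PTerm.rename]; split <;> rfl
  | lam z t ih => simp only [PTerm.rename]; split <;> simp [PTerm.size, ih]
  | app t u iht ihu => simp [PTerm.rename, PTerm.size, iht, ihu]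

theorem alpha_size {t t' : PTerm} (h : PAlpha t t') : t.size = t'.size := by
  induction h with
  | var => rfl
  | app _ _ iht ihu => simp [PTerm.size, iht, ihu]
  | lam x y t t' _ _ ih => simp only [PTerm.size]; rw [← ih, rename_size]

def stW (π : List PTerm) : ℕ := (π.map PTerm.size).sum
def envW (E : WEnv) : ℕ := (E.map (fun p => p.2.size)).sum
def dumpW (D : WDump) : ℕ := (D.map (fun d => envW d.1 + stW d.2.2)).sum
def wt (s : WState) : ℕ := s.code.size + stW s.stack + dumpW s.dump + envW s.env

def allLe (N : ℕ) (s : WState) : Prop :=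
  s.code.size ≤ N ∧ (∀ u ∈ s.stack, u.size ≤ N) ∧
  (∀ d ∈ s.dump, (∀ p ∈ d.1, p.2.size ≤ N) ∧ (∀ u ∈ d.2.2, u.size ≤ N)) ∧
  (∀ p ∈ s.env, p.2.size ≤ N)

theorem wam_key {N c₁ c₂ m e : ℕ} {s s' : WState} (h : WExec c₁ c₂ m e s s')
    (hle : allLe N s) : c₁ + c₂ + wt s' ≤ wt s + e * N := by
  induction h with
  | refl s => simp
  | c1step t u π D E h ih =>
      obtain ⟨hc, hst, hd, he⟩ := hle
      simp only [PTerm.size] at hc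
      have hle' : allLe N ⟨t, u :: π, D, E⟩ := by
        refine ⟨show t.size ≤ N by omega, ?_, hd, he⟩
        intro v hv
        rcases List.mem_cons.1 hv with rfl | hv
        · omega
        · exact hst v hv
      have := ih hle'
      simp only [wt, stW, List.map_cons, List.sum_cons, PTerm.size] at this ⊢
      omega
  | c2step x t π D E₁ E₂ hfr h ih =>
      obtain ⟨hc, hst, hd, he⟩ := hle
      have htN : t.size ≤ N := he (x, t) (by simp)
      have hle' : allLe N ⟨t, [], (E₁, x, π) :: D, E₂⟩ := by
        refine ⟨htN, by simp, ?_, ?_⟩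
        · intro d hd'
          rcases List.mem_cons.1 hd' with rfl | hd'
          · exact ⟨fun p hp => he p (by simp [hp]), hst⟩
          · exact hd d hd'
        · intro p hp; exact he p (by simp [hp])
      have := ih hle'
      simp only [wt, stW, envW, dumpW, List.map_cons, List.sum_cons, List.map_append,
        List.sum_append, List.map_nil, List.sum_nil, PTerm.size] at this ⊢
      omega
  | mstep x t u π D E h ih =>
      obtain ⟨hc, hst, hd, he⟩ := hle
      simp only [PTerm.size] at hc
      have hle' : allLe N ⟨t, π, D, (x, u) :: E⟩ := by
        refine ⟨show t.size ≤ N by omega, fun v hv => hst v (by simp [hv]), hd, ?_⟩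
        intro p hp
        rcases List.mem_cons.1 hp with rfl | hp
        · exact hst u (by simp)
        · exact he p hp
      have := ih hle'
      simp only [wt, stW, envW, List.map_cons, List.sum_cons, PTerm.size] at this ⊢
      omega
  | estep y b v' x π D E₁ E ha h ih =>
      obtain ⟨hc, hst, hd, he⟩ := hle
      have hdh := hd (E₁, x, π) (by simp)
      have hsz : v'.size = (PTerm.lam y b).size := (alpha_size ha).symm
      have hle' : allLe N ⟨v', π, D, E₁ ++ (x, .lam y b) :: E⟩ := by
        refine ⟨by rw [hsz]; exact hc, hdh.2, fun d hd' => hd d (by simp [hd']), ?_⟩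
        intro p hp
        rcases List.mem_append.1 hp with hp | hp
        · exact hdh.1 p hp
        · rcases List.mem_cons.1 hp with rfl | hp
          · exact hc
          · exact he p hp
      have hk := ih hle'
      simp only [PTerm.size] at hc
      simp only [wt, stW, envW, dumpW, List.map_cons, List.sum_cons, List.map_append,
        List.sum_append, List.map_nil, List.sum_nil, PTerm.size, hsz, Nat.add_mul,
        Nat.one_mul] at hk ⊢
      omega

/-- The WAM has globally bilinear commutative transitions: there is a constant
    `K` such that, for every execution `ρ` of initial (closed) code `t̄`, the
    number of commutative transitions satisfies
    `|ρ|_c1 + |ρ|_c2 ≤ K·(|t̄|+1)·(|ρ|_p + 1)`,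
    i.e. `|ρ|_c = O((|t̄|+1)·|ρ|_p)`. -/
theorem wam_globally_bilinear :
    ∃ K : ℕ, ∀ (t₀ : PTerm) (c₁ c₂ m e : ℕ) (s : WState),
      t₀.fv = ∅ →
      WExec c₁ c₂ m e ⟨t₀, [], [], []⟩ s →
      c₁ + c₂ ≤ K * (t₀.size + 1) * (m + e + 1) := by
  refine ⟨1, fun t₀ c₁ c₂ m e s _ h => ?_⟩
  have hle : allLe t₀.size ⟨t₀, [], [], []⟩ :=
    ⟨le_refl _, by simp, by simp, by simp⟩
  have hk := wam_key h hle
  simp only [wt, stW, envW, dumpW, List.map_nil, List.sum_nil] at hk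
  simp only [Nat.add_zero] at hk
  have hk2 : c₁ + c₂ ≤ t₀.size + e * t₀.size :=
    le_trans (Nat.le_add_right _ _) hk
  calc c₁ + c₂ ≤ t₀.size + e * t₀.size := hk2
    _ = t₀.size * (e + 1) := by ring
    _ ≤ (t₀.size + 1) * (m + e + 1) := Nat.mul_le_mul (by omega) (by omega)
    _ = 1 * (t₀.size + 1) * (m + e + 1) := by ring
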